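/- Let T be a tree and v a major stem with two distinct mid legs L and L' (legs of length exactly 2). Let u ∈ L and u' ∈ L' with d_T(v,u) = d_T(v,u') = k for k ∈ {1,2}. Then no vertex x with x ≠ u and x ≠ u' resolves u and u' in T^3; hence every resolving set of T^3 contains u or u'. -/

import Mathlib

open SimpleGraph

/-- Ceiling of `n / 3` over the naturals. -/
def ceil3 (n : ℕ) : ℕ := (n + 2) / 3

/-- The cube of a graph: same vertices, `u,v` adjacent iff `1 ≤ d(u,v) ≤ 3`. -/
def cube {V : Type*} (G : SimpleGraph V) : SimpleGraph V where
  Adj u v := u ≠ v ∧ 1 ≤ G.dist u v ∧ G.dist u v ≤ 3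
  symm := ⟨fun u v ⟨h1, h2, h3⟩ =>
    ⟨h1.symm, by rwa [SimpleGraph.dist_comm], by rwa [SimpleGraph.dist_comm]⟩⟩
  loopless := ⟨fun u ⟨h, _⟩ => h rfl⟩

/-- `S` is a resolving set of `G`. -/
def IsResolving {V : Type*} (G : SimpleGraph V) (S : Set V) : Prop :=
  ∀ u v : V, u ≠ v → ∃ s ∈ S, G.dist s u ≠ G.dist s v

/-- The metric dimension of a graph on a finite vertex type. -/
noncomputable def metricDim {V : Type*} [Fintype V] (G : SimpleGraph V) : ℕ :=
  sInf {n | ∃ S : Finset V, S.card = n ∧ IsResolving G (S : Set V)}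

/-- A connected component `D` of `T − w` is a *leg* (branch path) at `w` if the
branch it spans is a path, equivalently (in a tree) every vertex of it has
degree at most 2 in `T`. -/
def IsLegComp {V : Type*} [Fintype V] (G : SimpleGraph V) [DecidableRel G.Adj] (w : V)
    (D : (G.induce {x | x ≠ w}).ConnectedComponent) : Prop :=
  ∀ x ∈ D.supp, G.degree (x : V) ≤ 2

/-- A *major stem* is a vertex of degree ≥ 3 having at least two legs attached. -/
def IsMajorStem {V : Type*} [Fintype V] (G : SimpleGraph V) [DecidableRel G.Adj]
    (w : V) : Prop :=
  3 ≤ G.degree w ∧ ∃ D₁ D₂ : (G.induce {x | x ≠ w}).ConnectedComponent,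
    D₁ ≠ D₂ ∧ IsLegComp G w D₁ ∧ IsLegComp G w D₂

section Aux
variable {V : Type*} {G : SimpleGraph V}

lemma dist_step (hc : G.Connected) {a b : V} {n : ℕ} (h : G.dist a b = n + 1) :
    ∃ c, G.Adj a c ∧ G.dist c b = n := by
  obtain ⟨p, hp⟩ := hc.exists_walk_length_eq_dist a b
  cases p with
  | nil => rw [h] at hp; simp at hp
  | @cons _ c _ hadj q =>
    refine ⟨c, hadj, ?_⟩
    have h1 : G.dist c b ≤ q.length := SimpleGraph.dist_le q
    have h2 : G.dist a b ≤ G.dist a c + G.dist c b := hc.dist_triangle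
    have h3 : G.dist a c ≤ 1 := by
      simpa using SimpleGraph.dist_le hadj.toWalk
    have hq : q.length + 1 = n + 1 := by
      rw [← h, ← hp]; simp [SimpleGraph.Walk.length_cons]
    omega

lemma cube_walk (hc : G.Connected) : ∀ (n : ℕ) (a b : V), G.dist a b = n →
    ∃ p : (cube G).Walk a b, p.length ≤ ceil3 n := by
  intro n
  induction n using Nat.strong_induction_on with
  | _ n ih =>
    intro a b h
    rcases Nat.eq_zero_or_pos n with rfl | h1
    · have : a = b := (hc.dist_eq_zero_iff).mp h
      subst this
      exact ⟨SimpleGraph.Walk.nil, by simp⟩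
    rcases le_or_gt n 3 with h3 | h3
    · have hab : a ≠ b := by
        rintro rfl; rw [SimpleGraph.dist_self] at h; omega
      have hadj : (cube G).Adj a b := ⟨hab, by omega, by omega⟩
      exact ⟨hadj.toWalk, by simpa [ceil3] using by omega⟩
    · obtain ⟨c1, h1a, h1d⟩ := dist_step hc (show G.dist a b = (n-1) + 1 by omega)
      obtain ⟨c2, h2a, h2d⟩ := dist_step hc (show G.dist c1 b = (n-2) + 1 by omega)
      obtain ⟨c3, h3a, h3d⟩ := dist_step hc (show G.dist c2 b = (n-3) + 1 by omega)
      have hd3 : G.dist a c3 ≤ 3 := by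
        simpa using SimpleGraph.dist_le
          (SimpleGraph.Walk.cons h1a (SimpleGraph.Walk.cons h2a h3a.toWalk))
      have hne : a ≠ c3 := by
        rintro rfl; rw [h3d] at h; omega
      have hpos : 1 ≤ G.dist a c3 := hc.pos_dist_of_ne hne
      have hadj : (cube G).Adj a c3 := ⟨hne, hpos, hd3⟩
      obtain ⟨p, hp⟩ := ih (n - 3) (by omega) c3 b h3d
      refine ⟨SimpleGraph.Walk.cons hadj p, ?_⟩
      simp only [SimpleGraph.Walk.length_cons]
      have : ceil3 (n - 3) + 1 = ceil3 n := by unfold ceil3; omega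
      omega

lemma tree_dist_le_cube (hc : G.Connected) {a b : V} (p : (cube G).Walk a b) :
    G.dist a b ≤ 3 * p.length := by
  induction p with
  | nil => simp
  | @cons a c b h q ih =>
    have tri : G.dist a b ≤ G.dist a c + G.dist c b := hc.dist_triangle
    have := h.2.2
    simp only [SimpleGraph.Walk.length_cons]
    omega

lemma cube_dist_eq (hc : G.Connected) (a b : V) :
    (cube G).dist a b = ceil3 (G.dist a b) := by
  obtain ⟨p, hp⟩ := cube_walk hc (G.dist a b) a b rfl
  have upper : (cube G).dist a b ≤ ceil3 (G.dist a b) :=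
    le_trans (SimpleGraph.dist_le p) hp
  have hr : (cube G).Reachable a b := ⟨p⟩
  obtain ⟨q, hq⟩ := hr.exists_walk_length_eq_dist
  have lower := tree_dist_le_cube hc q
  rw [hq] at lower
  unfold ceil3 at upper ⊢
  omega

lemma reachable_induce_of_walk {v : V} :
    ∀ {a b : V} (p : G.Walk a b), (∀ y ∈ p.support, y ≠ v) → ∀ (ha : a ≠ v) (hb : b ≠ v),
    (G.induce {x | x ≠ v}).Reachable ⟨a, ha⟩ ⟨b, hb⟩ := by
  intro a b p
  induction p with
  | nil => intro _ ha hb; rfl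
  | @cons a c b h q ih =>
    intro hp ha hb
    have hcv : c ≠ v := hp c (by simp)
    have h1 : (G.induce {x | x ≠ v}).Adj ⟨a, ha⟩ ⟨c, hcv⟩ := h
    exact h1.reachable.trans (ih (fun y hy => hp y (by simp [hy])) hcv hb)

lemma dist_add_of_sep (hc : G.Connected) {v a b : V} (ha : a ≠ v) (hb : b ≠ v)
    (hcomp : (G.induce {x | x ≠ v}).connectedComponentMk ⟨a, ha⟩ ≠
      (G.induce {x | x ≠ v}).connectedComponentMk ⟨b, hb⟩) :
    G.dist a b = G.dist a v + G.dist v b := by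
  classical
  obtain ⟨p, hp⟩ := hc.exists_walk_length_eq_dist a b
  have hv : v ∈ p.support := by
    by_contra hv
    exact hcomp (SimpleGraph.ConnectedComponent.eq.mpr
      (reachable_induce_of_walk p (fun y hy hyv => hv (by rw [hyv] at hy; exact hy)) ha hb))
  have h1 := SimpleGraph.dist_le (p.takeUntil v hv)
  have h2 := SimpleGraph.dist_le (p.dropUntil v hv)
  have h3 : (p.takeUntil v hv).length + (p.dropUntil v hv).length = p.length := by
    rw [← SimpleGraph.Walk.length_append, p.take_spec hv]
  have tri : G.dist a b ≤ G.dist a v + G.dist v b := hc.dist_triangle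
  omega

lemma adj_of_supp_pair {W : Type*} {H : SimpleGraph W} {a b : W} (hr : H.Reachable a b)
    (hab : a ≠ b) (hmem : ∀ c, H.Adj a c → c = a ∨ c = b) : H.Adj a b := by
  obtain ⟨p⟩ := hr
  cases p with
  | nil => exact absurd rfl hab
  | cons h q =>
    rcases hmem _ h with rfl | rfl
    · exact absurd rfl h.ne
    · exact h

end Aux

open SimpleGraph in
lemma side_calc {V : Type*} {G : SimpleGraph V} (hT : G.IsTree) {v : V}
    {D D' : (G.induce {x | x ≠ v}).ConnectedComponent} (hne : D ≠ D')
    (hmid : D.supp.ncard = 2)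
    {u u' : {x : V // x ≠ v}} (hu : u ∈ D.supp) (hu' : u' ∈ D'.supp)
    {k : ℕ} (hk : k = 1 ∨ k = 2)
    (hdu : G.dist v (u : V) = k) (hdu' : G.dist v (u' : V) = k)
    {x : V} (hxv : x ≠ v) (hxu : x ≠ (u : V))
    (hX : (⟨x, hxv⟩ : {x : V // x ≠ v}) ∈ D.supp) :
    G.dist x (u : V) = 1 ∧ 1 ≤ G.dist x (u' : V) ∧ G.dist x (u' : V) ≤ 3 := by
  classical
  have hc := hT.isConnected
  have hmkU : (G.induce {x | x ≠ v}).connectedComponentMk u = D :=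
    (ConnectedComponent.mem_supp_iff D u).mp hu
  have hmkX : (G.induce {x | x ≠ v}).connectedComponentMk ⟨x, hxv⟩ = D :=
    (ConnectedComponent.mem_supp_iff _ _).mp hX
  have hmkU' : (G.induce {x | x ≠ v}).connectedComponentMk u' = D' :=
    (ConnectedComponent.mem_supp_iff D' u').mp hu'
  have hXu : (⟨x, hxv⟩ : {x : V // x ≠ v}) ≠ u := fun h => hxu (congrArg Subtype.val h)
  obtain ⟨A, B, hAB, hs⟩ := Set.ncard_eq_two.mp hmid
  have hsupp : D.supp = {u, (⟨x, hxv⟩ : {x : V // x ≠ v})} := by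
    have h1 : u ∈ ({A, B} : Set _) := hs ▸ hu
    have h2 : (⟨x, hxv⟩ : {x : V // x ≠ v}) ∈ ({A, B} : Set _) := hs ▸ hX
    simp only [Set.mem_insert_iff, Set.mem_singleton_iff] at h1 h2
    rw [hs]
    rcases h1 with rfl | rfl
    · rcases h2 with h2 | h2
      · exact absurd h2 hXu
      · rw [h2]
    · rcases h2 with h2 | h2
      · rw [h2, Set.pair_comm]
      · exact absurd h2 hXu
  have hrXU : (G.induce {x | x ≠ v}).Reachable u ⟨x, hxv⟩ :=
    (ConnectedComponent.eq).mp (by rw [hmkU, hmkX])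
  have hadjI : (G.induce {x | x ≠ v}).Adj u ⟨x, hxv⟩ := by
    refine adj_of_supp_pair hrXU (Ne.symm hXu) (fun c hc' => ?_)
    have hcD : c ∈ D.supp := (ConnectedComponent.mem_supp_iff _ _).mpr
      ((ConnectedComponent.sound hc'.symm.reachable).trans hmkU)
    rw [hsupp] at hcD
    simpa using hcD
  have hadj : G.Adj (u : V) x := hadjI
  have hdxu : G.dist x (u : V) = 1 := by
    rw [SimpleGraph.dist_eq_one_iff_adj]; exact hadj.symm
  have hsep : G.dist x (u' : V) = G.dist x v + G.dist v (u' : V) :=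
    dist_add_of_sep hc hxv u'.2 (by rw [hmkX]; rw [show (⟨(u' : V), u'.2⟩ : {x : V // x ≠ v}) = u' from rfl, hmkU']; exact hne)
  have hxvpos : 1 ≤ G.dist x v := hc.pos_dist_of_ne hxv
  rcases hk with rfl | rfl
  · have huv : G.dist (u : V) v = 1 := by rw [SimpleGraph.dist_comm]; exact hdu
    have tri : G.dist x v ≤ G.dist x (u : V) + G.dist (u : V) v := hc.dist_triangle
    exact ⟨hdxu, by omega, by omega⟩
  · obtain ⟨c, hvc, hcd⟩ := dist_step hc (show G.dist v (u : V) = 1 + 1 from hdu)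
    have hcu : G.Adj c (u : V) := SimpleGraph.dist_eq_one_iff_adj.mp hcd
    have hcv : c ≠ v := hvc.ne'
    have hcadjI : (G.induce {x | x ≠ v}).Adj ⟨c, hcv⟩ u := hcu
    have hcsupp : (⟨c, hcv⟩ : {x : V // x ≠ v}) ∈ D.supp :=
      (ConnectedComponent.mem_supp_iff _ _).mpr
        ((ConnectedComponent.sound hcadjI.reachable).trans hmkU)
    rw [hsupp] at hcsupp
    have hcx : c = (u : V) ∨ c = x := by simpa [Subtype.ext_iff] using hcsupp
    rcases hcx with h | h
    · exact absurd (h ▸ hcu) (G.loopless.irrefl _)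
    · have hvx : G.Adj v x := h ▸ hvc
      have : G.dist x v = 1 := by
        rw [SimpleGraph.dist_eq_one_iff_adj]; exact hvx.symm
      exact ⟨hdxu, by omega, by omega⟩

/-- Vertices at equal distance k ∈ {1,2} from a major stem on two distinct mid
legs cannot be resolved by any third vertex in the cube of the tree; hence any
resolving set of the cube contains one of them. -/
theorem midleg_pair_unresolved {V : Type*} [Fintype V] (G : SimpleGraph V)
    [DecidableRel G.Adj] (hT : G.IsTree) (v : V) (hdeg : 3 ≤ G.degree v)
    (D D' : (G.induce {x | x ≠ v}).ConnectedComponent) (hne : D ≠ D')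
    (hleg : IsLegComp G v D) (hleg' : IsLegComp G v D')
    (hmid : D.supp.ncard = 2) (hmid' : D'.supp.ncard = 2)
    (u : {x : V // x ≠ v}) (u' : {x : V // x ≠ v})
    (hu : u ∈ D.supp) (hu' : u' ∈ D'.supp) (k : ℕ) (hk : k = 1 ∨ k = 2)
    (hdu : G.dist v (u : V) = k) (hdu' : G.dist v (u' : V) = k) :
    (∀ x : V, x ≠ (u : V) → x ≠ (u' : V) →
        (cube G).dist x (u : V) = (cube G).dist x (u' : V)) ∧
    (∀ S : Set V, IsResolving (cube G) S → (u : V) ∈ S ∨ (u' : V) ∈ S) := by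

  classical
  have hc := hT.isConnected
  have hmkU : (G.induce {x | x ≠ v}).connectedComponentMk u = D :=
    (ConnectedComponent.mem_supp_iff D u).mp hu
  have hmkU' : (G.induce {x | x ≠ v}).connectedComponentMk u' = D' :=
    (ConnectedComponent.mem_supp_iff D' u').mp hu'
  have huu' : (u : V) ≠ (u' : V) := fun h =>
    hne (by rw [← hmkU, ← hmkU', Subtype.ext h])
  have main : ∀ x : V, x ≠ (u : V) → x ≠ (u' : V) →
      (cube G).dist x (u : V) = (cube G).dist x (u' : V) := by
    intro x hxu hxu'
    rw [cube_dist_eq hc, cube_dist_eq hc]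
    by_cases hxv : x = v
    · subst hxv; rw [hdu, hdu']
    · by_cases hXD : (⟨x, hxv⟩ : {x : V // x ≠ v}) ∈ D.supp
      · obtain ⟨e1, e2, e3⟩ := side_calc hT hne hmid hu hu' hk hdu hdu' hxv hxu hXD
        rw [e1]; unfold ceil3; omega
      · by_cases hXD' : (⟨x, hxv⟩ : {x : V // x ≠ v}) ∈ D'.supp
        · obtain ⟨e1, e2, e3⟩ := side_calc hT hne.symm hmid' hu' hu hk hdu' hdu hxv hxu' hXD'
          rw [e1]; unfold ceil3; omega
        · have h1 : G.dist x (u : V) = G.dist x v + G.dist v (u : V) :=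
            dist_add_of_sep hc hxv u.2 (fun h => hXD
              ((ConnectedComponent.mem_supp_iff _ _).mpr
                (h.trans (by rw [show (⟨(u : V), u.2⟩ : {x : V // x ≠ v}) = u from rfl, hmkU]))))
          have h2 : G.dist x (u' : V) = G.dist x v + G.dist v (u' : V) :=
            dist_add_of_sep hc hxv u'.2 (fun h => hXD'
              ((ConnectedComponent.mem_supp_iff _ _).mpr
                (h.trans (by rw [show (⟨(u' : V), u'.2⟩ : {x : V // x ≠ v}) = u' from rfl, hmkU']))))
          rw [h1, h2, hdu, hdu']
  refine ⟨main, fun S hS => ?_⟩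
  obtain ⟨s, hsS, hsne⟩ := hS _ _ huu'
  rcases eq_or_ne s (u : V) with rfl | h1
  · exact Or.inl hsS
  rcases eq_or_ne s (u' : V) with rfl | h2
  · exact Or.inr hsS
  exact absurd (main s h1 h2) hsne
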